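/- Every d-degenerate graph is proper conflict-free (degree + d + 1)-choosable: given any list assignment L with |L(v)| = d(v) + d + 1 for every vertex v, there is a proper conflict-free L-coloring. -/

import Mathlib

/-- A proper conflict-free coloring of `G`. -/
def IsPCF {V β : Type*} (G : SimpleGraph V) (φ : V → β) : Prop :=
  (∀ ⦃a b : V⦄, G.Adj a b → φ a ≠ φ b) ∧
  ∀ v : V, (∃ u, G.Adj v u) → ∃ c : β, ∃! u : V, G.Adj v u ∧ φ u = c

/-- `G` is `d`-degenerate: every (nonempty, induced) subgraph has a vertex of
degree at most `d` inside it. -/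
def Degenerate {V : Type*} (G : SimpleGraph V) [DecidableRel G.Adj] (d : ℕ) : Prop :=
  ∀ s : Finset V, s.Nonempty → ∃ v ∈ s, (s.filter (fun u => G.Adj v u)).card ≤ d

/-- Key inductive lemma: any finset `s` admits a partial coloring which is proper on `s`,
chooses colors from the lists, and such that every vertex (in `s` or not) having a
neighbor in `s` has a neighbor in `s` whose color is unique among its `s`-neighbors. -/
theorem pcf_aux {V : Type*} [Fintype V] [DecidableEq V] (G : SimpleGraph V)
    [DecidableRel G.Adj] (d : ℕ) (hdeg : Degenerate G d) (L : V → Finset ℕ)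
    (hL : ∀ v, (L v).card = G.degree v + d + 1) :
    ∀ s : Finset V, ∃ φ : V → ℕ,
      (∀ v ∈ s, φ v ∈ L v) ∧
      (∀ v ∈ s, ∀ u ∈ s, G.Adj v u → φ v ≠ φ u) ∧
      (∀ w : V, (∃ u ∈ s, G.Adj w u) →
        ∃ u ∈ s, G.Adj w u ∧ ∀ x ∈ s, G.Adj w x → φ x = φ u → x = u) := by
  intro s
  induction s using Finset.strongInduction with
  | _ s ih =>
    rcases s.eq_empty_or_nonempty with rfl | hs
    · exact ⟨fun _ => 0, by simp, by simp, by simp⟩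
    obtain ⟨v, hv, hvd⟩ := hdeg s hs
    set s' := s.erase v with hs'
    obtain ⟨φ, h1, h2, h3⟩ := ih s' (Finset.erase_ssubset hv)
    -- for each vertex `w` with a neighbor in `s'`, its designated uniquely colored neighbor
    have hssub : s' ⊆ s := Finset.erase_subset _ _
    classical
    let uw : V → V := fun w =>
      if h : ∃ u ∈ s', G.Adj w u then (h3 w h).choose else v
    have huw : ∀ w : V, (∃ u ∈ s', G.Adj w u) →
        uw w ∈ s' ∧ G.Adj w (uw w) ∧
          ∀ x ∈ s', G.Adj w x → φ x = φ (uw w) → x = uw w := by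
      intro w h
      have : uw w = (h3 w h).choose := dif_pos h
      rw [this]
      obtain ⟨hu1, hu2, hu3⟩ := (h3 w h).choose_spec
      exact ⟨hu1, hu2, hu3⟩
    -- the forbidden set of colors for `v`
    let F : Finset ℕ := ((s'.filter (fun u => G.Adj v u)).image φ) ∪
      ((G.neighborFinset v).image (fun w => φ (uw w)))
    have hFcard : F.card ≤ d + G.degree v := by
      refine le_trans (Finset.card_union_le _ _) (Nat.add_le_add ?_ ?_)
      · refine le_trans (Finset.card_image_le) (le_trans (Finset.card_le_card ?_) hvd)
        exact Finset.filter_subset_filter _ hssub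
      · exact le_trans (Finset.card_image_le) (le_of_eq (G.card_neighborFinset_eq_degree v))
    have hex : ∃ c ∈ L v, c ∉ F := by
      rw [← Finset.not_subset]
      intro hsub
      have := Finset.card_le_card hsub
      rw [hL v] at this
      omega
    obtain ⟨c, hcL, hcF⟩ := hex
    refine ⟨Function.update φ v c, ?_, ?_, ?_⟩
    · intro u hu
      rcases eq_or_ne u v with rfl | hne
      · simpa using hcL
      · rw [Function.update_of_ne hne]
        exact h1 u (Finset.mem_erase.2 ⟨hne, hu⟩)
    · -- properness
      intro a ha b hb hab
      rcases eq_or_ne v a with rfl | hna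
      · have hbv : b ≠ v := fun h => G.loopless.irrefl v (h ▸ hab)
        rw [Function.update_self, Function.update_of_ne hbv]
        intro h
        apply hcF
        apply Finset.mem_union_left
        exact Finset.mem_image.2 ⟨b, Finset.mem_filter.2
          ⟨Finset.mem_erase.2 ⟨hbv, hb⟩, hab⟩, h.symm⟩
      · rcases eq_or_ne v b with rfl | hnb
        · rw [Function.update_of_ne (Ne.symm hna), Function.update_self]
          intro h
          apply hcF
          apply Finset.mem_union_left
          exact Finset.mem_image.2 ⟨a, Finset.mem_filter.2
            ⟨Finset.mem_erase.2 ⟨Ne.symm hna, ha⟩, hab.symm⟩, h⟩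
        · rw [Function.update_of_ne (Ne.symm hna), Function.update_of_ne (Ne.symm hnb)]
          exact h2 a (Finset.mem_erase.2 ⟨Ne.symm hna, ha⟩) b
            (Finset.mem_erase.2 ⟨Ne.symm hnb, hb⟩) hab
    · -- conflict-free invariant
      intro w hw
      by_cases hA : ∃ u ∈ s', G.Adj w u
      · obtain ⟨hu1, hu2, hu3⟩ := huw w hA
        have huv : uw w ≠ v := Finset.ne_of_mem_erase hu1
        refine ⟨uw w, hssub hu1, hu2, ?_⟩
        intro x hx hadjx heq
        rw [Function.update_of_ne huv] at heq
        rcases eq_or_ne v x with rfl | hnx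
        · exfalso
          rw [Function.update_self] at heq
          apply hcF
          apply Finset.mem_union_right
          exact Finset.mem_image.2 ⟨w, (G.mem_neighborFinset v w).2 hadjx.symm, heq.symm⟩
        · rw [Function.update_of_ne (Ne.symm hnx)] at heq
          exact hu3 x (Finset.mem_erase.2 ⟨Ne.symm hnx, hx⟩) hadjx heq
      · -- the only neighbor of `w` in `s` is `v`
        obtain ⟨u, hu, hadj⟩ := hw
        have huv : u = v := by
          by_contra hne
          exact hA ⟨u, Finset.mem_erase.2 ⟨hne, hu⟩, hadj⟩
        subst huv
        refine ⟨u, hu, hadj, ?_⟩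
        intro x hx hadjx _
        by_contra hne
        exact hA ⟨x, Finset.mem_erase.2 ⟨hne, hx⟩, hadjx⟩

/-- Every `d`-degenerate graph is proper conflict-free (degree + d + 1)-choosable. -/
theorem stmt4 {V : Type*} [Fintype V] [DecidableEq V] (G : SimpleGraph V)
    [DecidableRel G.Adj] (d : ℕ) (hdeg : Degenerate G d) (L : V → Finset ℕ)
    (hL : ∀ v, (L v).card = G.degree v + d + 1) :
    ∃ φ : V → ℕ, (∀ v, φ v ∈ L v) ∧ IsPCF G φ := by
  obtain ⟨φ, h1, h2, h3⟩ := pcf_aux G d hdeg L hL Finset.univ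
  refine ⟨φ, fun v => h1 v (Finset.mem_univ v), ?_, ?_⟩
  · intro a b hab
    exact h2 a (Finset.mem_univ a) b (Finset.mem_univ b) hab
  · intro v hv
    obtain ⟨u, hu⟩ := hv
    obtain ⟨u', _, hadj, huniq⟩ := h3 v ⟨u, Finset.mem_univ u, hu⟩
    refine ⟨φ u', u', ⟨hadj, rfl⟩, ?_⟩
    rintro x ⟨hadjx, heq⟩
    exact huniq x (Finset.mem_univ x) hadjx heq
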